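/- Let $k$ be a field of characteristic zero, $S' = k[x, y, w]$, and $I' = (x y^2, y^3)$. Then the degree-zero graded piece of $\mathrm{Hom}_{S'}(I'/I'^2, S'/I')$ has dimension $7$ over $k$. -/

import Mathlib

open MvPolynomial

/-- The degree-zero part of `Hom_{S'}(I', S'/I')` (identified with
`Hom_{S'}(I'/I'², S'/I')`, since any `S'`-linear map `I' → S'/I'` kills `I'²`). -/
def degreeZeroHoms (k : Type*) [Field k] (σ : Type*)
    (I : Ideal (MvPolynomial σ k)) :
    Submodule k ((↥I) →ₗ[MvPolynomial σ k] (MvPolynomial σ k ⧸ I)) where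
  carrier := {φ | ∀ (m : ℕ) (p : MvPolynomial σ k) (hp : p ∈ I),
      p ∈ homogeneousSubmodule σ k m →
      φ ⟨p, hp⟩ ∈ (homogeneousSubmodule σ k m).map (Ideal.Quotient.mkₐ k I).toLinearMap}
  add_mem' := by
    intro a b ha hb m p hp hhom
    simpa using add_mem (ha m p hp hhom) (hb m p hp hhom)
  zero_mem' := by
    intro m p hp hhom
    simp
  smul_mem' := by
    intro c a ha m p hp hhom
    simpa using Submodule.smul_mem _ c (ha m p hp hhom)

namespace Stmt9Aux

variable {k : Type*} [Field k]

local notation "SS" => MvPolynomial (Fin 3) k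

/-! ### Exponent triples -/

/-- exponent triple as a finsupp -/
noncomputable def tri (a b c : ℕ) : Fin 3 →₀ ℕ :=
  Finsupp.single 0 a + Finsupp.single 1 b + Finsupp.single 2 c

lemma tri_apply (a b c : ℕ) (i : Fin 3) :
    tri a b c i = ![a, b, c] i := by
  fin_cases i <;> simp [tri, Finsupp.single_apply]

lemma eq_tri (μ : Fin 3 →₀ ℕ) : μ = tri (μ 0) (μ 1) (μ 2) := by
  ext i; fin_cases i <;> simp [tri_apply]

lemma tri_inj {a b c a' b' c' : ℕ} :
    tri a b c = tri a' b' c' ↔ a = a' ∧ b = b' ∧ c = c' := by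
  constructor
  · intro h
    exact ⟨by simpa [tri_apply] using DFunLike.congr_fun h 0,
      by simpa [tri_apply] using DFunLike.congr_fun h 1,
      by simpa [tri_apply] using DFunLike.congr_fun h 2⟩
  · rintro ⟨rfl, rfl, rfl⟩; rfl

lemma tri_le {a b c a' b' c' : ℕ} :
    tri a b c ≤ tri a' b' c' ↔ a ≤ a' ∧ b ≤ b' ∧ c ≤ c' := by
  rw [Finsupp.le_def]
  constructor
  · intro h
    exact ⟨by simpa [tri_apply] using h 0, by simpa [tri_apply] using h 1,
      by simpa [tri_apply] using h 2⟩
  · rintro ⟨h1, h2, h3⟩ i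
    fin_cases i <;> simpa [tri_apply]

lemma tri_add (a b c a' b' c' : ℕ) :
    tri a b c + tri a' b' c' = tri (a + a') (b + b') (c + c') := by
  ext i; fin_cases i <;> simp [tri_apply]

lemma tri_sub (a b c a' b' c' : ℕ) :
    tri a b c - tri a' b' c' = tri (a - a') (b - b') (c - c') := by
  ext i; fin_cases i <;> simp [tri_apply, Finsupp.tsub_apply]

lemma degree_fin3 (d : Fin 3 →₀ ℕ) : d.degree = d 0 + d 1 + d 2 := by
  rw [Finsupp.degree_apply, Finset.sum_subset (Finset.subset_univ _)]
  · exact Fin.sum_univ_three d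
  · intro i _ hi; simpa using (Finsupp.notMem_support_iff.mp hi)

lemma tri_degree (a b c : ℕ) : (tri a b c).degree = a + b + c := by
  rw [degree_fin3]; simp [tri_apply]

lemma Xp (a b c : ℕ) : (X 0 ^ a * X 1 ^ b * X 2 ^ c : SS)
    = monomial (tri a b c) 1 := by
  simp [X_pow_eq_monomial, monomial_mul, tri]

/-! ### The ideal -/

variable (k) in
noncomputable def IS : Ideal SS := Ideal.span {X 0 * X 1 ^ 2, X 1 ^ 3}

lemma hg1 : (X 0 * X 1 ^ 2 : SS) ∈ IS k := Ideal.subset_span (by simp)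
lemma hg2 : (X 1 ^ 3 : SS) ∈ IS k := Ideal.subset_span (by simp)

lemma g1_eq : (X 0 * X 1 ^ 2 : SS) = monomial (tri 1 2 0) 1 := by
  rw [← Xp]; ring

lemma g2_eq : (X 1 ^ 3 : SS) = monomial (tri 0 3 0) 1 := by
  rw [← Xp]; ring

lemma coeff_zero_of_mem {p : SS} (hp : p ∈ IS k)
    {μ : Fin 3 →₀ ℕ} (h1 : ¬ tri 1 2 0 ≤ μ) (h2 : ¬ tri 0 3 0 ≤ μ) :
    coeff μ p = 0 := by
  induction hp using Submodule.span_induction generalizing μ with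
  | mem x hx =>
      rcases hx with rfl | rfl
      · rw [g1_eq, coeff_monomial, if_neg]
        rintro rfl; exact h1 le_rfl
      · rw [g2_eq, coeff_monomial, if_neg]
        rintro rfl; exact h2 le_rfl
  | zero => simp
  | add x y _ _ hx hy => simp [hx h1 h2, hy h1 h2]
  | smul a x _ hx =>
      rw [smul_eq_mul, coeff_mul]
      refine Finset.sum_eq_zero fun q hq => ?_
      rw [Finset.HasAntidiagonal.mem_antidiagonal] at hq
      have h2q : q.2 ≤ μ := hq ▸ le_add_self
      rw [hx (fun h => h1 (h.trans h2q)) (fun h => h2 (h.trans h2q)), mul_zero]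

/-! ### The syzygy -/

lemma prime_X0 : Prime (X 0 : SS) := by
  refine comap_prime (f := finSuccEquiv k 2) (g := (finSuccEquiv k 2).symm)
    (fun a => by simp) ?_
  rw [finSuccEquiv_X_zero]
  exact Polynomial.prime_X

lemma not_X0_dvd_X1 : ¬ (X 0 : SS) ∣ X 1 := by
  rintro ⟨c, hc⟩
  have := congrArg (eval (fun i : Fin 3 => if i = 0 then (0 : k) else 1)) hc
  simp at this

lemma syzygy {s t : SS}
    (h : s * (X 0 * X 1 ^ 2) + t * X 1 ^ 3 = 0) :
    ∃ c, s = -(c * X 1) ∧ t = c * X 0 := by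
  have h2 : X 1 ^ 2 * (s * X 0 + t * X 1) = 0 := by ring_nf; ring_nf at h; linear_combination h
  have hX1 : (X 1 : SS) ^ 2 ≠ 0 := pow_ne_zero _ (X_ne_zero 1)
  have h3 : s * X 0 + t * X 1 = 0 := by
    rcases mul_eq_zero.mp h2 with h | h
    · exact absurd h hX1
    · exact h
  have hdvd : (X 0 : SS) ∣ t * X 1 := by
    refine ⟨-s, ?_⟩
    linear_combination h3
  rcases (prime_X0.dvd_mul.mp hdvd) with ht | ht
  · rcases ht with ⟨c, rfl⟩
    refine ⟨c, ?_, mul_comm _ _⟩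
    have : X 0 * (s + c * X 1) = 0 := by linear_combination h3
    rcases mul_eq_zero.mp this with h | h
    · exact absurd h (X_ne_zero 0)
    · linear_combination h
  · exact absurd ht not_X0_dvd_X1

/-! ### Constructing homs from values on the generators -/

variable (k) in
noncomputable def gen : (SS × SS) →ₗ[SS] SS :=
  LinearMap.coprod (LinearMap.toSpanSingleton SS SS (X 0 * X 1 ^ 2))
    (LinearMap.toSpanSingleton SS SS (X 1 ^ 3))

lemma gen_apply (z : SS × SS) : gen k z = z.1 * (X 0 * X 1 ^ 2) + z.2 * X 1 ^ 3 := by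
  simp [gen, LinearMap.toSpanSingleton_apply, smul_eq_mul]

variable (k) in
noncomputable def genI : (SS × SS) →ₗ[SS] (IS k) :=
  LinearMap.codRestrict (IS k) (gen k) (fun z => by
    rw [gen_apply]
    exact Ideal.add_mem _ (Ideal.mul_mem_left _ _ hg1) (Ideal.mul_mem_left _ _ hg2))

lemma genI_surjective : Function.Surjective (genI k) := by
  rintro ⟨p, hp⟩
  obtain ⟨s, t, h⟩ := Ideal.mem_span_pair.mp hp
  exact ⟨(s, t), Subtype.ext (by simpa [genI, gen_apply] using h)⟩

variable (k) in
noncomputable def pairMap (u v : SS) : (SS × SS) →ₗ[SS] (SS ⧸ IS k) :=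
  (IS k).mkQ.comp
    (LinearMap.coprod (LinearMap.toSpanSingleton SS SS u) (LinearMap.toSpanSingleton SS SS v))

lemma pairMap_apply (u v : SS) (z : SS × SS) :
    pairMap k u v z = Submodule.Quotient.mk (z.1 * u + z.2 * v) := by
  show (IS k).mkQ (z.1 • u + z.2 • v) = _
  rw [smul_eq_mul, smul_eq_mul, Submodule.mkQ_apply]

lemma ker_le (u v : SS) (hr : X 1 * u - X 0 * v ∈ IS k) :
    LinearMap.ker (genI k) ≤ LinearMap.ker (pairMap k u v) := by
  intro z hz
  rw [LinearMap.mem_ker] at hz ⊢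
  have h0 : gen k z = 0 := congrArg Subtype.val hz
  rw [gen_apply] at h0
  obtain ⟨c, hs, ht⟩ := syzygy h0
  rw [pairMap_apply, hs, ht, Submodule.Quotient.mk_eq_zero]
  have : -(c * X 1) * u + c * X 0 * v = -(c * (X 1 * u - X 0 * v)) := by ring
  rw [this]
  exact neg_mem (Ideal.mul_mem_left _ _ hr)

variable (k) in
noncomputable def Phi (u v : SS) (hr : X 1 * u - X 0 * v ∈ IS k) :
    (IS k) →ₗ[SS] (SS ⧸ IS k) :=
  (Submodule.liftQ _ (pairMap k u v) (ker_le u v hr)).comp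
    ((genI k).quotKerEquivOfSurjective genI_surjective).symm.toLinearMap

lemma Phi_genI (u v : SS) (hr : X 1 * u - X 0 * v ∈ IS k) (z : SS × SS) :
    Phi k u v hr (genI k z) = Submodule.Quotient.mk (z.1 * u + z.2 * v) := by
  rw [← pairMap_apply]
  have he : ((genI k).quotKerEquivOfSurjective genI_surjective)
      (Submodule.Quotient.mk z) = genI k z := by
    simp [LinearMap.quotKerEquivOfSurjective]
  have := congrArg ((genI k).quotKerEquivOfSurjective genI_surjective).symm he
  rw [LinearEquiv.symm_apply_apply] at this
  simp [Phi, ← this]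

lemma Phi_g1 (u v : SS) (hr : X 1 * u - X 0 * v ∈ IS k) :
    Phi k u v hr ⟨X 0 * X 1 ^ 2, hg1⟩ = Submodule.Quotient.mk u := by
  have : (⟨X 0 * X 1 ^ 2, hg1⟩ : IS k) = genI k (1, 0) :=
    Subtype.ext (by simp [genI, gen_apply])
  rw [this, Phi_genI]; simp

lemma Phi_g2 (u v : SS) (hr : X 1 * u - X 0 * v ∈ IS k) :
    Phi k u v hr ⟨X 1 ^ 3, hg2⟩ = Submodule.Quotient.mk v := by
  have : (⟨X 1 ^ 3, hg2⟩ : IS k) = genI k (0, 1) :=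
    Subtype.ext (by simp [genI, gen_apply])
  rw [this, Phi_genI]; simp

/-- two linear maps on I agreeing on the generators agree -/
lemma hom_ext {M : Type*} [AddCommGroup M] [Module SS M]
    {φ ψ : (IS k) →ₗ[SS] M}
    (h1 : φ ⟨X 0 * X 1 ^ 2, hg1⟩ = ψ ⟨X 0 * X 1 ^ 2, hg1⟩)
    (h2 : φ ⟨X 1 ^ 3, hg2⟩ = ψ ⟨X 1 ^ 3, hg2⟩) : φ = ψ := by
  ext ⟨p, hp⟩
  obtain ⟨s, t, h⟩ := Ideal.mem_span_pair.mp hp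
  have hdecomp : (⟨p, hp⟩ : IS k)
      = s • (⟨X 0 * X 1 ^ 2, hg1⟩ : IS k) + t • (⟨X 1 ^ 3, hg2⟩ : IS k) :=
    Subtype.ext (by simpa [smul_eq_mul] using h.symm)
  rw [hdecomp, map_add, map_add, map_smul, map_smul, map_smul, map_smul, h1, h2]

/-! ### Homogeneity -/

lemma degree_le_of_le {ν μ : Fin 3 →₀ ℕ} (h : ν ≤ μ) : ν.degree ≤ μ.degree := by
  rw [eq_tri ν, eq_tri μ] at h ⊢
  rw [tri_le] at h
  rw [tri_degree, tri_degree]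
  omega

lemma degree_sub {ν μ : Fin 3 →₀ ℕ} (h : ν ≤ μ) :
    (μ - ν).degree = μ.degree - ν.degree := by
  rw [eq_tri ν, eq_tri μ] at h ⊢
  rw [tri_le] at h
  rw [tri_sub, tri_degree, tri_degree, tri_degree]
  omega

lemma comp_mul_monomial (ν : Fin 3 →₀ ℕ) (d n : ℕ) (hν : ν.degree = d) (s : SS) :
    homogeneousComponent n (s * monomial ν (1 : k)) =
      if d ≤ n then homogeneousComponent (n - d) s * monomial ν 1 else 0 := by
  ext μ
  rw [coeff_homogeneousComponent]
  by_cases hle : d ≤ n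
  · rw [if_pos hle, coeff_mul_monomial', coeff_mul_monomial']
    by_cases hνμ : ν ≤ μ
    · rw [if_pos hνμ, if_pos hνμ, coeff_homogeneousComponent]
      have h1 : ν.degree ≤ μ.degree := degree_le_of_le hνμ
      have h2 : (μ - ν).degree = μ.degree - ν.degree := degree_sub hνμ
      by_cases hμ : μ.degree = n
      · rw [if_pos hμ, if_pos (by omega)]
      · rw [if_neg hμ, if_neg (by omega), zero_mul]
    · rw [if_neg hνμ, if_neg hνμ, ite_self]
  · rw [if_neg hle, coeff_zero, coeff_mul_monomial']
    by_cases hνμ : ν ≤ μ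
    · rw [if_pos hνμ]
      by_cases hμ : μ.degree = n
      · exfalso
        exact hle (hν ▸ hμ ▸ degree_le_of_le hνμ)
      · rw [if_neg hμ]
    · rw [if_neg hνμ, ite_self]

lemma Phi_mem (u v : SS) (hr : X 1 * u - X 0 * v ∈ IS k)
    (hu : u ∈ homogeneousSubmodule (Fin 3) k 3)
    (hv : v ∈ homogeneousSubmodule (Fin 3) k 3) :
    Phi k u v hr ∈ degreeZeroHoms k (Fin 3) (IS k) := by
  intro m p hp hpm
  obtain ⟨s, t, hst⟩ := Ideal.mem_span_pair.mp hp
  have hcomp := congrArg (homogeneousComponent m) hst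
  rw [map_add, g1_eq, g2_eq, comp_mul_monomial _ 3 m (tri_degree 1 2 0) s,
    comp_mul_monomial _ 3 m (tri_degree 0 3 0) t,
    homogeneousComponent_of_mem hpm, if_pos rfl] at hcomp
  by_cases h3 : 3 ≤ m
  · rw [if_pos h3, if_pos h3] at hcomp
    have hz : (⟨p, hp⟩ : IS k)
        = genI k (homogeneousComponent (m - 3) s, homogeneousComponent (m - 3) t) := by
      refine Subtype.ext ?_
      show p = gen k _
      rw [gen_apply, g1_eq, g2_eq]
      exact hcomp.symm
    rw [hz, Phi_genI]
    refine ⟨homogeneousComponent (m - 3) s * u + homogeneousComponent (m - 3) t * v,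
      ?_, rfl⟩
    have hsu : (homogeneousComponent (m - 3) s * u).IsHomogeneous ((m - 3) + 3) :=
      (homogeneousComponent_isHomogeneous (m - 3) s).mul
        ((mem_homogeneousSubmodule _ _).mp hu)
    have htv : (homogeneousComponent (m - 3) t * v).IsHomogeneous ((m - 3) + 3) :=
      (homogeneousComponent_isHomogeneous (m - 3) t).mul
        ((mem_homogeneousSubmodule _ _).mp hv)
    have hmm : (m - 3) + 3 = m := by omega
    rw [hmm] at hsu htv
    exact Submodule.add_mem _ hsu htv
  · rw [if_neg h3, if_neg h3] at hcomp
    have hp0 : p = 0 := by simpa using hcomp.symm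
    have hz : (⟨p, hp⟩ : IS k) = 0 := Subtype.ext hp0
    rw [hz, map_zero]
    exact Submodule.zero_mem _

/-! ### The seven basis homs -/

variable (k) in
noncomputable def UU : Fin 7 → SS :=
  ![monomial (tri 3 0 0) 1, monomial (tri 2 1 0) 1, monomial (tri 2 0 1) 1,
    monomial (tri 1 1 1) 1, monomial (tri 1 0 2) 1, monomial (tri 0 2 1) 1, 0]

variable (k) in
noncomputable def VV : Fin 7 → SS :=
  ![monomial (tri 2 1 0) 1, 0, monomial (tri 1 1 1) 1, 0, monomial (tri 0 1 2) 1, 0,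
    monomial (tri 0 2 1) 1]

lemma hrUV (i : Fin 7) : X 1 * UU k i - X 0 * VV k i ∈ IS k := by
  fin_cases i
  · show X 1 * (monomial (tri 3 0 0) 1 : SS) - X 0 * monomial (tri 2 1 0) 1 ∈ IS k
    rw [← Xp, ← Xp]
    have h : X 1 * (X 0 ^ 3 * X 1 ^ 0 * X 2 ^ 0 : SS)
        - X 0 * (X 0 ^ 2 * X 1 ^ 1 * X 2 ^ 0) = 0 := by ring
    rw [h]; exact Submodule.zero_mem _
  · show X 1 * (monomial (tri 2 1 0) 1 : SS) - X 0 * 0 ∈ IS k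
    rw [← Xp]
    have h : X 1 * (X 0 ^ 2 * X 1 ^ 1 * X 2 ^ 0 : SS) - X 0 * 0
        = X 0 * (X 0 * X 1 ^ 2) := by ring
    rw [h]; exact Ideal.mul_mem_left _ _ hg1
  · show X 1 * (monomial (tri 2 0 1) 1 : SS) - X 0 * monomial (tri 1 1 1) 1 ∈ IS k
    rw [← Xp, ← Xp]
    have h : X 1 * (X 0 ^ 2 * X 1 ^ 0 * X 2 ^ 1 : SS)
        - X 0 * (X 0 ^ 1 * X 1 ^ 1 * X 2 ^ 1) = 0 := by ring
    rw [h]; exact Submodule.zero_mem _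
  · show X 1 * (monomial (tri 1 1 1) 1 : SS) - X 0 * 0 ∈ IS k
    rw [← Xp]
    have h : X 1 * (X 0 ^ 1 * X 1 ^ 1 * X 2 ^ 1 : SS) - X 0 * 0
        = X 2 * (X 0 * X 1 ^ 2) := by ring
    rw [h]; exact Ideal.mul_mem_left _ _ hg1
  · show X 1 * (monomial (tri 1 0 2) 1 : SS) - X 0 * monomial (tri 0 1 2) 1 ∈ IS k
    rw [← Xp, ← Xp]
    have h : X 1 * (X 0 ^ 1 * X 1 ^ 0 * X 2 ^ 2 : SS)
        - X 0 * (X 0 ^ 0 * X 1 ^ 1 * X 2 ^ 2) = 0 := by ring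
    rw [h]; exact Submodule.zero_mem _
  · show X 1 * (monomial (tri 0 2 1) 1 : SS) - X 0 * 0 ∈ IS k
    rw [← Xp]
    have h : X 1 * (X 0 ^ 0 * X 1 ^ 2 * X 2 ^ 1 : SS) - X 0 * 0
        = X 2 * X 1 ^ 3 := by ring
    rw [h]; exact Ideal.mul_mem_left _ _ hg2
  · show X 1 * (0 : SS) - X 0 * monomial (tri 0 2 1) 1 ∈ IS k
    rw [← Xp]
    have h : X 1 * (0 : SS) - X 0 * (X 0 ^ 0 * X 1 ^ 2 * X 2 ^ 1)
        = (-X 2) * (X 0 * X 1 ^ 2) := by ring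
    rw [h]; exact Ideal.mul_mem_left _ _ hg1

lemma hUU (i : Fin 7) : UU k i ∈ homogeneousSubmodule (Fin 3) k 3 := by
  fin_cases i <;>
    first
      | exact Submodule.zero_mem _
      | · rw [mem_homogeneousSubmodule]
          exact isHomogeneous_monomial _ (by rw [tri_degree])

lemma hVV (i : Fin 7) : VV k i ∈ homogeneousSubmodule (Fin 3) k 3 := by
  fin_cases i <;>
    first
      | exact Submodule.zero_mem _
      | · rw [mem_homogeneousSubmodule]
          exact isHomogeneous_monomial _ (by rw [tri_degree])

variable (k) in
noncomputable def phis (i : Fin 7) : ↥(degreeZeroHoms k (Fin 3) (IS k)) :=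
  ⟨Phi k (UU k i) (VV k i) (hrUV i), Phi_mem _ _ _ (hUU i) (hVV i)⟩

variable (k) in
noncomputable def F : (Fin 7 → k) →ₗ[k] ↥(degreeZeroHoms k (Fin 3) (IS k)) :=
  ∑ i : Fin 7, (LinearMap.proj i : (Fin 7 → k) →ₗ[k] k).smulRight (phis k i)


lemma UU0 : UU k 0 = monomial (tri 3 0 0) 1 := rfl
lemma UU1 : UU k 1 = monomial (tri 2 1 0) 1 := rfl
lemma UU2 : UU k 2 = monomial (tri 2 0 1) 1 := rfl
lemma UU3 : UU k 3 = monomial (tri 1 1 1) 1 := rfl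
lemma UU4 : UU k 4 = monomial (tri 1 0 2) 1 := rfl
lemma UU5 : UU k 5 = monomial (tri 0 2 1) 1 := rfl
lemma UU6 : UU k 6 = 0 := rfl
lemma VV0 : VV k 0 = monomial (tri 2 1 0) 1 := rfl
lemma VV1 : VV k 1 = 0 := rfl
lemma VV2 : VV k 2 = monomial (tri 1 1 1) 1 := rfl
lemma VV3 : VV k 3 = 0 := rfl
lemma VV4 : VV k 4 = monomial (tri 0 1 2) 1 := rfl
lemma VV5 : VV k 5 = 0 := rfl
lemma VV6 : VV k 6 = monomial (tri 0 2 1) 1 := rfl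

variable (k) in
noncomputable def Upoly (a : Fin 7 → k) : SS := ∑ i, a i • UU k i

variable (k) in
noncomputable def Vpoly (a : Fin 7 → k) : SS := ∑ i, a i • VV k i

lemma F_coe (a : Fin 7 → k) :
    ((F k a : ↥(degreeZeroHoms k (Fin 3) (IS k))) : (IS k) →ₗ[SS] SS ⧸ IS k)
      = ∑ i, a i • (Phi k (UU k i) (VV k i) (hrUV i)) := by
  show (((∑ i : Fin 7, (LinearMap.proj i : (Fin 7 → k) →ₗ[k] k).smulRight (phis k i)) a :
      ↥(degreeZeroHoms k (Fin 3) (IS k))) : (IS k) →ₗ[SS] SS ⧸ IS k) = _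
  rw [LinearMap.sum_apply]
  rw [AddSubmonoidClass.coe_finset_sum]
  exact Finset.sum_congr rfl fun i _ => rfl

lemma mk_sum_smul (f : Fin 7 → SS) (a : Fin 7 → k) :
    (Submodule.Quotient.mk (∑ i, a i • f i) : SS ⧸ IS k)
      = ∑ i, a i • (Submodule.Quotient.mk (f i) : SS ⧸ IS k) := by
  rw [← Submodule.mkQ_apply, map_sum]
  exact Finset.sum_congr rfl fun i _ => Submodule.Quotient.mk_smul _ _ _

lemma F_val_g1 (a : Fin 7 → k) :
    ((F k a : ↥(degreeZeroHoms k (Fin 3) (IS k))) : (IS k) →ₗ[SS] SS ⧸ IS k)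
      ⟨X 0 * X 1 ^ 2, hg1⟩ = Submodule.Quotient.mk (Upoly k a) := by
  rw [F_coe, LinearMap.sum_apply, Upoly, mk_sum_smul]
  congr 1
  ext i : 1
  rw [LinearMap.smul_apply, Phi_g1]

lemma F_val_g2 (a : Fin 7 → k) :
    ((F k a : ↥(degreeZeroHoms k (Fin 3) (IS k))) : (IS k) →ₗ[SS] SS ⧸ IS k)
      ⟨X 1 ^ 3, hg2⟩ = Submodule.Quotient.mk (Vpoly k a) := by
  rw [F_coe, LinearMap.sum_apply, Vpoly, mk_sum_smul]
  congr 1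
  ext i : 1
  rw [LinearMap.smul_apply, Phi_g2]

lemma coeff_Upoly (a : Fin 7 → k) (x y z : ℕ) :
    coeff (tri x y z) (Upoly k a)
      = (if 3 = x ∧ 0 = y ∧ 0 = z then a 0 else 0)
        + (if 2 = x ∧ 1 = y ∧ 0 = z then a 1 else 0)
        + (if 2 = x ∧ 0 = y ∧ 1 = z then a 2 else 0)
        + (if 1 = x ∧ 1 = y ∧ 1 = z then a 3 else 0)
        + (if 1 = x ∧ 0 = y ∧ 2 = z then a 4 else 0)
        + (if 0 = x ∧ 2 = y ∧ 1 = z then a 5 else 0) := by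
  rw [Upoly, Fin.sum_univ_seven]
  simp only [UU0, UU1, UU2, UU3, UU4, UU5, UU6, coeff_add, coeff_smul,
    coeff_monomial, tri_inj, smul_zero, smul_eq_mul, mul_ite, mul_one, mul_zero, add_zero]

lemma coeff_Vpoly (a : Fin 7 → k) (x y z : ℕ) :
    coeff (tri x y z) (Vpoly k a)
      = (if 2 = x ∧ 1 = y ∧ 0 = z then a 0 else 0)
        + (if 1 = x ∧ 1 = y ∧ 1 = z then a 2 else 0)
        + (if 0 = x ∧ 1 = y ∧ 2 = z then a 4 else 0)
        + (if 0 = x ∧ 2 = y ∧ 1 = z then a 6 else 0) := by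
  rw [Vpoly, Fin.sum_univ_seven]
  simp only [VV0, VV1, VV2, VV3, VV4, VV5, VV6, coeff_add, coeff_smul,
    coeff_monomial, tri_inj, smul_zero, smul_eq_mul, mul_ite, mul_one, mul_zero, add_zero,
    zero_add]

lemma F_injective : Function.Injective (F k) := by
  rw [injective_iff_map_eq_zero]
  intro a ha
  have hUmem : Upoly k a ∈ IS k := by
    rw [← Submodule.Quotient.mk_eq_zero, ← F_val_g1, ha]
    rfl
  have hVmem : Vpoly k a ∈ IS k := by
    rw [← Submodule.Quotient.mk_eq_zero, ← F_val_g2, ha]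
    rfl
  have key : ∀ x y z : ℕ, ¬ (1 ≤ x ∧ 2 ≤ y) → ¬ 3 ≤ y →
      coeff (tri x y z) (Upoly k a) = 0 ∧ coeff (tri x y z) (Vpoly k a) = 0 := by
    intro x y z h1 h2
    constructor
    · exact coeff_zero_of_mem hUmem (by rw [tri_le]; omega) (by rw [tri_le]; omega)
    · exact coeff_zero_of_mem hVmem (by rw [tri_le]; omega) (by rw [tri_le]; omega)
  funext i
  fin_cases i
  · have := (key 3 0 0 (by omega) (by omega)).1
    rw [coeff_Upoly] at this
    simpa using this
  · have := (key 2 1 0 (by omega) (by omega)).1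
    rw [coeff_Upoly] at this
    simpa using this
  · have := (key 2 0 1 (by omega) (by omega)).1
    rw [coeff_Upoly] at this
    simpa using this
  · have := (key 1 1 1 (by omega) (by omega)).1
    rw [coeff_Upoly] at this
    simpa using this
  · have := (key 1 0 2 (by omega) (by omega)).1
    rw [coeff_Upoly] at this
    simpa using this
  · have := (key 0 2 1 (by omega) (by omega)).1
    rw [coeff_Upoly] at this
    simpa using this
  · have := (key 0 2 1 (by omega) (by omega)).2
    rw [coeff_Vpoly] at this
    simpa using this

lemma X1_eq : (X 1 : SS) = monomial (tri 0 1 0) 1 := by rw [← Xp]; ring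
lemma X0_eq : (X 0 : SS) = monomial (tri 1 0 0) 1 := by rw [← Xp]; ring

lemma rel_coeff {u₀ v₀ : SS} (hr : X 1 * u₀ - X 0 * v₀ ∈ IS k) (x y z : ℕ)
    (h1 : ¬ (1 ≤ x ∧ 2 ≤ y)) (h2 : ¬ 3 ≤ y) :
    (if 1 ≤ y then coeff (tri x (y - 1) z) u₀ else 0)
      - (if 1 ≤ x then coeff (tri (x - 1) y z) v₀ else 0) = 0 := by
  have h := coeff_zero_of_mem hr (μ := tri x y z)
    (by rw [tri_le]; omega) (by rw [tri_le]; omega)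
  rw [coeff_sub, mul_comm (X 1 : SS), mul_comm (X 0 : SS), X1_eq, X0_eq,
    coeff_mul_monomial', coeff_mul_monomial', tri_sub, tri_sub] at h
  have e1 : (if tri 0 1 0 ≤ tri x y z then coeff (tri (x - 0) (y - 1) (z - 0)) u₀ * 1 else 0)
      = (if 1 ≤ y then coeff (tri x (y - 1) z) u₀ else 0) := by
    by_cases hy : 1 ≤ y
    · rw [if_pos (tri_le.mpr (by omega)), if_pos hy, mul_one]
      norm_num
    · rw [if_neg (fun hc => hy (tri_le.mp hc).2.1), if_neg hy]
  have e2 : (if tri 1 0 0 ≤ tri x y z then coeff (tri (x - 1) (y - 0) (z - 0)) v₀ * 1 else 0)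
      = (if 1 ≤ x then coeff (tri (x - 1) y z) v₀ else 0) := by
    by_cases hx : 1 ≤ x
    · rw [if_pos (tri_le.mpr (by omega)), if_pos hx, mul_one]
      norm_num
    · rw [if_neg (fun hc => hx (tri_le.mp hc).1), if_neg hx]
  rw [e1, e2] at h
  exact h

set_option maxHeartbeats 2000000 in
lemma F_surjective : Function.Surjective (F k) := by
  rintro ⟨φ, hφ⟩
  obtain ⟨u₀, hu₀m, hu₀⟩ := hφ 3 (X 0 * X 1 ^ 2) hg1
    (by rw [mem_homogeneousSubmodule, g1_eq]
        exact isHomogeneous_monomial _ (by rw [tri_degree]))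
  obtain ⟨v₀, hv₀m, hv₀⟩ := hφ 3 (X 1 ^ 3) hg2
    (by rw [mem_homogeneousSubmodule, g2_eq]
        exact isHomogeneous_monomial _ (by rw [tri_degree]))
  have hu₀' : (Submodule.Quotient.mk u₀ : SS ⧸ IS k) = φ ⟨X 0 * X 1 ^ 2, hg1⟩ := hu₀
  have hv₀' : (Submodule.Quotient.mk v₀ : SS ⧸ IS k) = φ ⟨X 1 ^ 3, hg2⟩ := hv₀
  -- the relation y·φ(g1) = x·φ(g2)
  have hsm : (X 1 : SS) • (⟨X 0 * X 1 ^ 2, hg1⟩ : IS k) = (X 0 : SS) • ⟨X 1 ^ 3, hg2⟩ :=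
    Subtype.ext (by show (X 1 : SS) • (X 0 * X 1 ^ 2) = (X 0 : SS) • X 1 ^ 3
                    rw [smul_eq_mul, smul_eq_mul]; ring)
  have hrel := congrArg φ hsm
  rw [map_smul, map_smul, ← hu₀', ← hv₀'] at hrel
  have hr : X 1 * u₀ - X 0 * v₀ ∈ IS k := by
    rw [← Submodule.Quotient.mk_eq_zero, Submodule.Quotient.mk_sub,
      ← smul_eq_mul, ← smul_eq_mul, Submodule.Quotient.mk_smul, Submodule.Quotient.mk_smul,
      hrel, sub_self]
  -- coefficient relations
  have k1 : coeff (tri 0 1 2) u₀ = 0 := by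
    have h := rel_coeff hr 0 2 2 (by omega) (by omega)
    norm_num at h
    exact h
  have k2 : coeff (tri 0 0 3) u₀ = 0 := by
    have h := rel_coeff hr 0 1 3 (by omega) (by omega)
    norm_num at h
    exact h
  have k3 : coeff (tri 3 0 0) v₀ = 0 := by
    have h := rel_coeff hr 4 0 0 (by omega) (by omega)
    norm_num at h
    exact h
  have k4 : coeff (tri 2 1 0) v₀ = coeff (tri 3 0 0) u₀ := by
    have h := rel_coeff hr 3 1 0 (by omega) (by omega)
    norm_num [sub_eq_zero] at h
    exact h.symm
  have k5 : coeff (tri 2 0 1) v₀ = 0 := by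
    have h := rel_coeff hr 3 0 1 (by omega) (by omega)
    norm_num at h
    exact h
  have k6 : coeff (tri 1 1 1) v₀ = coeff (tri 2 0 1) u₀ := by
    have h := rel_coeff hr 2 1 1 (by omega) (by omega)
    norm_num [sub_eq_zero] at h
    exact h.symm
  have k7 : coeff (tri 1 0 2) v₀ = 0 := by
    have h := rel_coeff hr 2 0 2 (by omega) (by omega)
    norm_num at h
    exact h
  have k8 : coeff (tri 0 1 2) v₀ = coeff (tri 1 0 2) u₀ := by
    have h := rel_coeff hr 1 1 2 (by omega) (by omega)
    norm_num [sub_eq_zero] at h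
    exact h.symm
  have k9 : coeff (tri 0 0 3) v₀ = 0 := by
    have h := rel_coeff hr 1 0 3 (by omega) (by omega)
    norm_num at h
    exact h
  -- the parameters
  set a : Fin 7 → k := ![coeff (tri 3 0 0) u₀, coeff (tri 2 1 0) u₀, coeff (tri 2 0 1) u₀,
    coeff (tri 1 1 1) u₀, coeff (tri 1 0 2) u₀, coeff (tri 0 2 1) u₀,
    coeff (tri 0 2 1) v₀] with ha
  have ha0 : a 0 = coeff (tri 3 0 0) u₀ := rfl
  have ha1 : a 1 = coeff (tri 2 1 0) u₀ := rfl
  have ha2 : a 2 = coeff (tri 2 0 1) u₀ := rfl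
  have ha3 : a 3 = coeff (tri 1 1 1) u₀ := rfl
  have ha4 : a 4 = coeff (tri 1 0 2) u₀ := rfl
  have ha5 : a 5 = coeff (tri 0 2 1) u₀ := rfl
  have ha6 : a 6 = coeff (tri 0 2 1) v₀ := rfl
  have hU : u₀ = Upoly k a + coeff (tri 1 2 0) u₀ • monomial (tri 1 2 0) 1
      + coeff (tri 0 3 0) u₀ • monomial (tri 0 3 0) 1 := by
    have main : ∀ x y z : ℕ, coeff (tri x y z) u₀
        = coeff (tri x y z) (Upoly k a + coeff (tri 1 2 0) u₀ • monomial (tri 1 2 0) 1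
          + coeff (tri 0 3 0) u₀ • monomial (tri 0 3 0) 1) := by
      intro x y z
      by_cases h3 : x + y + z = 3
      · have hx : x ≤ 3 := by omega
        have hy : y ≤ 3 := by omega
        have hz : z ≤ 3 := by omega
        interval_cases x <;> interval_cases y <;> interval_cases z <;>
          first
            | (exfalso; omega)
            | norm_num [coeff_add, coeff_smul, coeff_Upoly, coeff_monomial, tri_inj,
                smul_eq_mul, ha0, ha1, ha2, ha3, ha4, ha5, ha6, k1, k2]
      · rw [((mem_homogeneousSubmodule _ _).mp hu₀m).coeff_eq_zero
          (by rw [tri_degree]; omega)]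
        rw [coeff_add, coeff_add, coeff_smul, coeff_smul, coeff_Upoly, coeff_monomial,
          coeff_monomial]
        simp only [tri_inj, smul_eq_mul]
        split_ifs <;> first | (exfalso; omega) | norm_num
    apply MvPolynomial.ext
    intro μ
    have h := main (μ 0) (μ 1) (μ 2)
    rwa [← eq_tri μ] at h
  have hV : v₀ = Vpoly k a + coeff (tri 1 2 0) v₀ • monomial (tri 1 2 0) 1
      + coeff (tri 0 3 0) v₀ • monomial (tri 0 3 0) 1 := by
    have main : ∀ x y z : ℕ, coeff (tri x y z) v₀
        = coeff (tri x y z) (Vpoly k a + coeff (tri 1 2 0) v₀ • monomial (tri 1 2 0) 1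
          + coeff (tri 0 3 0) v₀ • monomial (tri 0 3 0) 1) := by
      intro x y z
      by_cases h3 : x + y + z = 3
      · have hx : x ≤ 3 := by omega
        have hy : y ≤ 3 := by omega
        have hz : z ≤ 3 := by omega
        interval_cases x <;> interval_cases y <;> interval_cases z <;>
          first
            | (exfalso; omega)
            | norm_num [coeff_add, coeff_smul, coeff_Vpoly, coeff_monomial, tri_inj,
                smul_eq_mul, ha0, ha1, ha2, ha3, ha4, ha5, ha6, k3, k4, k5, k6, k7, k8, k9]
      · rw [((mem_homogeneousSubmodule _ _).mp hv₀m).coeff_eq_zero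
          (by rw [tri_degree]; omega)]
        rw [coeff_add, coeff_add, coeff_smul, coeff_smul, coeff_Vpoly, coeff_monomial,
          coeff_monomial]
        simp only [tri_inj, smul_eq_mul]
        split_ifs <;> first | (exfalso; omega) | norm_num
    apply MvPolynomial.ext
    intro μ
    have h := main (μ 0) (μ 1) (μ 2)
    rwa [← eq_tri μ] at h
  have hm1 : (monomial (tri 1 2 0) 1 : SS) ∈ IS k := by rw [← g1_eq]; exact hg1
  have hm2 : (monomial (tri 0 3 0) 1 : SS) ∈ IS k := by rw [← g2_eq]; exact hg2
  have hmkU : (Submodule.Quotient.mk (Upoly k a) : SS ⧸ IS k) = Submodule.Quotient.mk u₀ := by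
    rw [Submodule.Quotient.eq, hU, smul_eq_C_mul, smul_eq_C_mul]
    have : Upoly k a - (Upoly k a + C (coeff (tri 1 2 0) u₀) * monomial (tri 1 2 0) 1
        + C (coeff (tri 0 3 0) u₀) * monomial (tri 0 3 0) 1)
        = (- C (coeff (tri 1 2 0) u₀)) * monomial (tri 1 2 0) 1
          + (- C (coeff (tri 0 3 0) u₀)) * monomial (tri 0 3 0) 1 := by ring
    rw [this]
    exact Submodule.add_mem _ (Ideal.mul_mem_left _ _ hm1) (Ideal.mul_mem_left _ _ hm2)
  have hmkV : (Submodule.Quotient.mk (Vpoly k a) : SS ⧸ IS k) = Submodule.Quotient.mk v₀ := by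
    rw [Submodule.Quotient.eq, hV, smul_eq_C_mul, smul_eq_C_mul]
    have : Vpoly k a - (Vpoly k a + C (coeff (tri 1 2 0) v₀) * monomial (tri 1 2 0) 1
        + C (coeff (tri 0 3 0) v₀) * monomial (tri 0 3 0) 1)
        = (- C (coeff (tri 1 2 0) v₀)) * monomial (tri 1 2 0) 1
          + (- C (coeff (tri 0 3 0) v₀)) * monomial (tri 0 3 0) 1 := by ring
    rw [this]
    exact Submodule.add_mem _ (Ideal.mul_mem_left _ _ hm1) (Ideal.mul_mem_left _ _ hm2)
  refine ⟨a, Subtype.ext (hom_ext ?_ ?_)⟩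
  · rw [F_val_g1, hmkU]
    exact hu₀'
  · rw [F_val_g2, hmkV]
    exact hv₀'

end Stmt9Aux

/-- for `I' = (xy², y³)` in `S' = k[x, y, w]` (variables `x, y, w`
indexed by `0, 1, 2`), `char k = 0`, the degree-zero graded piece of
`Hom_{S'}(I'/I'², S'/I')` has `k`-dimension `7`. -/
theorem stmt_9 (k : Type*) [Field k] [CharZero k]
    (I' : Ideal (MvPolynomial (Fin 3) k))
    (hI' : I' = Ideal.span {X 0 * X 1 ^ 2, X 1 ^ 3}) :
    Module.finrank k (degreeZeroHoms k (Fin 3) I') = 7 := by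
  subst hI'
  have e : (Fin 7 → k) ≃ₗ[k] ↥(degreeZeroHoms k (Fin 3) (Stmt9Aux.IS k)) :=
    LinearEquiv.ofBijective (Stmt9Aux.F k) ⟨Stmt9Aux.F_injective, Stmt9Aux.F_surjective⟩
  have h1 : Module.finrank k (Fin 7 → k)
      = Module.finrank k ↥(degreeZeroHoms k (Fin 3) (Stmt9Aux.IS k)) :=
    e.finrank_eq
  rw [Module.finrank_fin_fun] at h1
  exact h1.symm
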